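/- Transitive closure of the dominator set does not grow: under the invariant dynamics, if ā(j) = h = ā'(j), then D'⁻¹⁺(j) ⊆ D⁻¹⁺(j), where D⁻¹⁺(j) is the set of vertices from which j is reachable by a nonempty directed path in D, and D' = d_H(D, ā'). -/

import Mathlib

inductive Act : Type
  | t | h | e
deriving DecidableEq, Repr

def switch : Act → Act
  | Act.t => Act.h
  | Act.h => Act.e
  | Act.e => Act.t

def fP (a : Act) (b : Bool) : Act := if b then switch a else a

inductive Cmd : Type
  | pass | force (b : Bool)
deriving DecidableEq

def fS (a : Act) (b : Bool) : Cmd → Act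
  | Cmd.pass => fP a b
  | Cmd.force b' => fP a b'

/-- The updated priority relation `dH D a`: edge `j ↦ k` of `D` is reversed when
`a j = e`, or when `a j = t` and `a k = h`; otherwise kept. -/
def dH {V : Type*} (D : V → V → Prop) (a : V → Act) : V → V → Prop :=
  fun j k =>
    (D j k ∧ ¬ (a j = Act.e ∨ (a j = Act.t ∧ a k = Act.h))) ∨
    (D k j ∧ (a k = Act.e ∨ (a k = Act.t ∧ a j = Act.h)))

/-- `D` is a priority map for `E`: it orients each edge of `E` exactly one way. -/
def IsPriorityMap {V : Type*} (E D : V → V → Prop) : Prop :=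
  (∀ j k, D j k → E j k) ∧ (∀ j k, E j k → (D j k ↔ ¬ D k j))

def topD {V : Type*} (E D : V → V → Prop) (j : V) : Prop := ∀ k, E j k → D j k

def ready {V : Type*} (E D : V → V → Prop) (a : V → Act) (j : V) : Prop :=
  a j = Act.h ∧ topD E D j ∧ ∀ k, E j k → a k ≠ Act.e

open scoped Classical in
noncomputable def gH {V : Type*} (E D : V → V → Prop) (a : V → Act) (j : V) : Cmd :=
  if a j = Act.t ∨ a j = Act.e then Cmd.pass
  else if ready E D a j then Cmd.force true else Cmd.force false

/-- One step of the polled dynamics of the philosophers under the hub controller. -/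
noncomputable def nextA {V : Type*} (E D : V → V → Prop) (a : V → Act) (b : V → Bool) :
    V → Act :=
  fun j => fS (a j) (b j) (gH E D a j)

def safe {V : Type*} (E : V → V → Prop) (a : V → Act) : Prop :=
  ∀ j k, E j k → ¬ (a j = Act.e ∧ a k = Act.e)

def Acyclic {V : Type*} (D : V → V → Prop) : Prop :=
  ∀ j, ¬ Relation.TransGen D j j

theorem transitive_dominator_does_not_grow {V : Type*} (E D : V → V → Prop)
    (hE_irr : ∀ j, ¬ E j j) (hE_symm : ∀ j k, E j k → E k j)
    (hD : IsPriorityMap E D)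
    (a : V → Act) (b : V → Bool)
    (hacyc : Acyclic D)
    (hsinks : ∀ j k, E j k → a k = Act.e → D j k)
    (hht : ∀ j k, E j k → a j = Act.h → a k = Act.t → D j k)
    (j : V) (hj : a j = Act.h) (hj' : nextA E D a b j = Act.h) :
    ∀ k, Relation.TransGen (dH D (nextA E D a b)) k j → Relation.TransGen D k j := by
  intro k hk
  set a' := nextA E D a b with ha'
  have key : ∀ x y, dH D a' x y → a' y = Act.h → D x y ∧ a' x = Act.h := by
    intro x y hxy hy
    rcases hxy with ⟨hd, hn⟩ | ⟨hd, h⟩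
    · refine ⟨hd, ?_⟩
      push_neg at hn
      cases hax : a' x with
      | t => exact absurd hy (hn.2 hax)
      | h => rfl
      | e => exact absurd hax hn.1
    · rcases h with h | ⟨h, _⟩ <;> simp [hy] at h
  suffices H : ∀ x, Relation.TransGen (dH D a') x j →
      Relation.TransGen D x j ∧ a' x = Act.h from (H k hk).1
  intro x hx
  induction hx using Relation.TransGen.head_induction_on with
  | single h =>
    obtain ⟨hd, hxh⟩ := key _ _ h hj'
    exact ⟨Relation.TransGen.single hd, hxh⟩
  | head h hT IH =>
    obtain ⟨hc, hch⟩ := IH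
    obtain ⟨hd, hxh⟩ := key _ _ h hch
    exact ⟨Relation.TransGen.head hd hc, hxh⟩
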